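/- If a graph G is paired 2-coverable and has at least 5 vertices, then G is Hamilton-connected. -/
import Mathlib


/-- A graph is paired 2-coverable if for any four distinct vertices `u, v, x, y`
there exist two vertex-disjoint paths, one from `u` to `v` and one from `x` to `y`,
that together cover every vertex of the graph. -/
def Paired2Coverable {V : Type*} (G : SimpleGraph V) : Prop :=
  ∀ u v x y : V, u ≠ v → u ≠ x → u ≠ y → v ≠ x → v ≠ y → x ≠ y →
    ∃ (P : G.Walk u v) (Q : G.Walk x y), P.IsPath ∧ Q.IsPath ∧
      (∀ z, z ∈ P.support → z ∉ Q.support) ∧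
      (∀ z, z ∈ P.support ∨ z ∈ Q.support)

/-- A graph is Hamilton-connected if every pair of distinct vertices is joined
by a Hamilton path. -/
def HamiltonConnected {V : Type*} [DecidableEq V] (G : SimpleGraph V) : Prop :=
  ∀ u v : V, u ≠ v → ∃ p : G.Walk u v, p.IsHamiltonian

theorem paired2Coverable_hamiltonConnected {V : Type*} [DecidableEq V] [Fintype V]
    (G : SimpleGraph V) (hG : Paired2Coverable G) (hcard : 5 ≤ Fintype.card V) :
    HamiltonConnected G := by
  intro u x hux
  -- find two vertices a, b distinct from u, x and each other
  obtain ⟨a, b, hab, hua, hub, hxa, hxb⟩ :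
      ∃ a b : V, a ≠ b ∧ u ≠ a ∧ u ≠ b ∧ x ≠ a ∧ x ≠ b := by
    have h : 1 < (({u, x} : Finset V)ᶜ).card := by
      have h2 : ({u, x} : Finset V).card ≤ 2 :=
        (Finset.card_insert_le _ _).trans (by simp)
      have := Finset.card_compl ({u, x} : Finset V)
      omega
    obtain ⟨a, ha, b, hb, hab⟩ := Finset.one_lt_card.mp h
    simp only [Finset.mem_compl, Finset.mem_insert, Finset.mem_singleton, not_or] at ha hb
    exact ⟨a, b, hab, fun h => ha.1 h.symm, fun h => hb.1 h.symm,
      fun h => ha.2 h.symm, fun h => hb.2 h.symm⟩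
  -- apply P2C to (u,x) and (a,b): the second path gives an edge avoiding u and x
  obtain ⟨P0, Q0, _, _, hdisj0, _⟩ := hG u x a b hux hua hub hxa hxb hab
  cases Q0 with
  | nil => exact absurd rfl hab
  | @cons _ c _ hac rest =>
    -- c is the second vertex of the path from a; a and c avoid u, x
    have hcQ : c ∈ (SimpleGraph.Walk.cons hac rest).support := by
      simp [SimpleGraph.Walk.support_cons]
    have huc : u ≠ c := fun h => hdisj0 u P0.start_mem_support (h ▸ hcQ)
    have hxc : x ≠ c := fun h => hdisj0 x P0.end_mem_support (h ▸ hcQ)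
    have hacne : a ≠ c := G.ne_of_adj hac
    -- apply P2C to (u,a) and (x,c)
    obtain ⟨P, Q, hP, hQ, hdisj, hcov⟩ := hG u a x c hua hux huc hxa.symm hacne hxc
    refine ⟨P.append (SimpleGraph.Walk.cons hac Q.reverse), ?_⟩
    intro z
    have hsupp : (P.append (SimpleGraph.Walk.cons hac Q.reverse)).support
        = P.support ++ Q.support.reverse := by
      rw [SimpleGraph.Walk.support_append, SimpleGraph.Walk.support_cons,
        SimpleGraph.Walk.support_reverse]
      rfl
    rw [hsupp, List.count_append, List.count_reverse]
    rcases hcov z with hz | hz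
    · have h1 : List.count z P.support = 1 := List.count_eq_one_of_mem hP.support_nodup hz
      have h2 : List.count z Q.support = 0 := List.count_eq_zero.mpr (hdisj z hz)
      omega
    · have h1 : List.count z P.support = 0 := List.count_eq_zero.mpr
        (fun hzP => hdisj z hzP hz)
      have h2 : List.count z Q.support = 1 := List.count_eq_one_of_mem hQ.support_nodup hz
      omega
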